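/- arXiv:1802.00709 — 3 statements merged into one kernel-verified Lean document; each statement's English description precedes it below -/
import Mathlib

section
/- Let X^1, …, X^n be jointly Gaussian centered random variables such that there is κ > 0 with Var(∑_{i=1}^n x_i (X^i - X^{i-1})) ≥ κ ∑_{i=1}^n x_i^2 c_i for all real x_1, …, x_n, where X^0 = 0 and c_i > 0. Then the determinant of the covariance matrix A of (X^1, …, X^n) satisfies det A ≥ κ^n ∏_{i=1}^n c_i. -/
open MeasureTheory ProbabilityTheory
open Matrix

lemma aux_memL2_gaussian (v : NNReal) : MemLp id 2 (gaussianReal 0 v) := by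
  rw [memLp_two_iff_integrable_sq aestronglyMeasurable_id]
  by_cases hv : v = 0
  · subst hv
    rw [gaussianReal_zero_var]
    exact (integrable_const (((0:ℝ))^2)).congr (ae_eq_dirac (fun x : ℝ => x ^ 2)).symm
  · rw [gaussianReal_of_var_ne_zero _ hv]
    rw [show gaussianPDF 0 v = fun x => ENNReal.ofReal (gaussianPDFReal 0 v x) from rfl,
      integrable_withDensity_iff (measurable_gaussianPDFReal 0 v).ennreal_ofReal]
    swap
    · exact ae_of_all _ fun x => ENNReal.ofReal_lt_top
    have hvpos : (0:ℝ) < (v:ℝ) := by positivity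
    have hb : (0:ℝ) < (2 * (v:ℝ))⁻¹ := by positivity
    have key : Integrable (fun x : ℝ => x ^ 2 * Real.exp (-(2 * (v:ℝ))⁻¹ * x ^ 2)) := by
      have := integrable_rpow_mul_exp_neg_mul_sq hb (s := 2) (by norm_num)
      refine this.congr ?_
      refine ae_of_all _ fun x => ?_
      norm_num [Real.rpow_two]
    have := (key.const_mul ((Real.sqrt (2 * Real.pi * (v:ℝ)))⁻¹))
    refine this.congr (ae_of_all _ fun x => ?_)
    simp only [id]
    rw [ENNReal.toReal_ofReal (gaussianPDFReal_nonneg 0 v x)]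
    simp only [gaussianPDFReal, sub_zero]
    rw [show -x ^ 2 / (2 * (v:ℝ)) = -(2 * (v:ℝ))⁻¹ * x ^ 2 by field_simp]
    ring

lemma aux_det_one_add {n : ℕ} {Q : Matrix (Fin n) (Fin n) ℝ} (hQ : Q.PosSemidef) :
    1 ≤ (1 + Q).det := by
  have hH := hQ.1
  have hspec := hH.spectral_theorem
  set U : Matrix (Fin n) (Fin n) ℝ := (hH.eigenvectorUnitary : Matrix (Fin n) (Fin n) ℝ) with hU
  have hUU : U * star U = 1 := (Matrix.mem_unitaryGroup_iff).mp hH.eigenvectorUnitary.2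
  have h1 : (1 + Q) = U * (1 + Matrix.diagonal (RCLike.ofReal ∘ hH.eigenvalues)) * star U := by
    rw [Matrix.mul_add, Matrix.add_mul, Matrix.mul_one, hUU]
    exact congrArg (1 + ·) hspec
  have h2 : U.det * (star U).det = 1 := by rw [← Matrix.det_mul, hUU, Matrix.det_one]
  rw [h1, Matrix.det_mul, Matrix.det_mul, mul_right_comm, h2, one_mul]
  have : (1 + Matrix.diagonal (RCLike.ofReal ∘ hH.eigenvalues) : Matrix (Fin n) (Fin n) ℝ)
      = Matrix.diagonal (fun i => 1 + hH.eigenvalues i) := by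
    rw [← Matrix.diagonal_one, Matrix.diagonal_add]
    congr 1
  rw [this, Matrix.det_diagonal]
  calc (1:ℝ) = ∏ _i : Fin n, 1 := by simp
    _ ≤ ∏ i, (1 + hH.eigenvalues i) :=
      Finset.prod_le_prod (fun i _ => zero_le_one)
        (fun i _ => by linarith [hQ.eigenvalues_nonneg i])

lemma aux_det_diag_add {n : ℕ} (d : Fin n → ℝ) (hd : ∀ k, 0 < d k)
    {P : Matrix (Fin n) (Fin n) ℝ} (hP : P.PosSemidef) :
    ∏ k, d k ≤ (Matrix.diagonal d + P).det := by
  set s : Fin n → ℝ := fun k => Real.sqrt (d k) with hs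
  have hspos : ∀ k, 0 < s k := fun k => Real.sqrt_pos.mpr (hd k)
  set S : Matrix (Fin n) (Fin n) ℝ := Matrix.diagonal s with hS
  set T : Matrix (Fin n) (Fin n) ℝ := Matrix.diagonal (fun k => (s k)⁻¹) with hT
  have hST : S * T = 1 := by
    rw [hS, hT, Matrix.diagonal_mul_diagonal,
      show (fun k => s k * (s k)⁻¹) = fun _ => (1:ℝ) from
        funext fun k => mul_inv_cancel₀ (hspos k).ne',
      Matrix.diagonal_one]
  have hTS : T * S = 1 := by
    rw [hS, hT, Matrix.diagonal_mul_diagonal,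
      show (fun k => (s k)⁻¹ * s k) = fun _ => (1:ℝ) from
        funext fun k => inv_mul_cancel₀ (hspos k).ne',
      Matrix.diagonal_one]
  have hSS : S * S = Matrix.diagonal d := by
    rw [hS, Matrix.diagonal_mul_diagonal,
      show (fun k => s k * s k) = d from funext fun k => Real.mul_self_sqrt (hd k).le]
  have hTH : T.conjTranspose = T := by
    rw [hT, Matrix.diagonal_conjTranspose]
    congr 1
  have hQ : (T * P * T).PosSemidef := by
    have := hP.mul_mul_conjTranspose_same T
    rwa [hTH] at this
  have key : Matrix.diagonal d + P = S * (1 + T * P * T) * S := by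
    rw [Matrix.mul_add, Matrix.add_mul, Matrix.mul_one, hSS]
    congr 1
    rw [show S * (T * P * T) * S = (S * T) * P * (T * S) from by noncomm_ring, hST, hTS,
      Matrix.one_mul, Matrix.mul_one]
  rw [key, Matrix.det_mul, Matrix.det_mul, Matrix.det_diagonal]
  have h1 : 1 ≤ (1 + T * P * T).det := aux_det_one_add hQ
  have hprod : (∏ k, s k) * (∏ k, s k) = ∏ k, d k := by
    rw [← Finset.prod_mul_distrib]
    exact Finset.prod_congr rfl fun k _ => Real.mul_self_sqrt (hd k).le
  calc ∏ k, d k = (∏ k, s k) * 1 * (∏ k, s k) := by rw [mul_one, hprod]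
    _ ≤ (∏ k, s k) * (1 + T * P * T).det * (∏ k, s k) := by
        have hsp : 0 < ∏ k, s k := Finset.prod_pos fun k _ => hspos k
        nlinarith

lemma aux_integrable_mul {Ω : Type*} [MeasureSpace Ω] {f g : Ω → ℝ}
    (hf : MemLp f 2 ℙ) (hg : MemLp g 2 ℙ) : Integrable (fun ω => f ω * g ω) ℙ := by
  have h := (((hf.add hg).integrable_sq.sub hf.integrable_sq).sub hg.integrable_sq).const_mul
    (2⁻¹ : ℝ)
  refine h.congr (ae_of_all _ fun ω => ?_)
  simp only [Pi.sub_apply, Pi.add_apply]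
  ring

lemma aux_sum_Icc (n : ℕ) (f : ℕ → ℝ) :
    ∑ i ∈ Finset.Icc 1 n, f i = ∑ k : Fin n, f ((k : ℕ) + 1) := by
  rw [← Finset.Ico_add_one_right_eq_Icc, Finset.sum_Ico_eq_sum_range,
    Fin.sum_univ_eq_sum_range (fun m => f (m + 1)) n]
  simp [add_comm]

lemma aux_prod_Icc (n : ℕ) (f : ℕ → ℝ) :
    ∏ i ∈ Finset.Icc 1 n, f i = ∏ k : Fin n, f ((k : ℕ) + 1) := by
  rw [← Finset.Ico_add_one_right_eq_Icc, Finset.prod_Ico_eq_prod_range,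
    Fin.prod_univ_eq_prod_range (fun m => f (m + 1)) n]
  simp [add_comm]

lemma aux_tri {n : ℕ} (i : Fin n) (g : ℕ → ℝ) :
    ∑ k : Fin n, (if (k : ℕ) ≤ (i : ℕ) then g (k : ℕ) else 0)
      = ∑ k ∈ Finset.range ((i : ℕ) + 1), g k := by
  rw [Fin.sum_univ_eq_sum_range (fun m => if m ≤ (i : ℕ) then g m else 0) n, ← Finset.sum_filter]
  congr 1
  ext a
  have hi := i.isLt
  simp only [Finset.mem_filter, Finset.mem_range, Nat.lt_succ_iff]
  omega

theorem stmt4 {Ω : Type*} [MeasureSpace Ω]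
    (hP : IsProbabilityMeasure (ℙ : Measure Ω))
    (n : ℕ) (X : ℕ → Ω → ℝ) (hmeas : ∀ i, Measurable (X i))
    (hX0 : ∀ ω, X 0 ω = 0)
    (hcentered : ∀ i, ∫ ω, X i ω = 0)
    (hGauss : ∀ x : ℕ → ℝ, ∃ v : NNReal,
      Measure.map (fun ω => ∑ i ∈ Finset.Icc 1 n, x i * X i ω) ℙ = gaussianReal 0 v)
    (κ : ℝ) (hκ : 0 < κ) (c : ℕ → ℝ) (hc : ∀ i, 0 < c i)
    (hnd : ∀ x : ℕ → ℝ,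
      κ * ∑ i ∈ Finset.Icc 1 n, (x i) ^ 2 * c i ≤
        ∫ ω, (∑ i ∈ Finset.Icc 1 n, x i * (X i ω - X (i - 1) ω)) ^ 2)
    (A : Matrix (Fin n) (Fin n) ℝ)
    (hA : ∀ i j : Fin n, A i j = ∫ ω, X ((i : ℕ) + 1) ω * X ((j : ℕ) + 1) ω) :
    κ ^ n * ∏ i ∈ Finset.Icc 1 n, c i ≤ A.det := by
  classical
  -- X j are in L² for j ≤ n
  have hL2 : ∀ j : ℕ, j ≤ n → MemLp (X j) 2 ℙ := by
    intro j hj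
    rcases Nat.eq_zero_or_pos j with rfl | hj1
    · rw [show X 0 = fun _ => (0:ℝ) from funext hX0]
      exact memLp_const 0
    · obtain ⟨v, hv⟩ := hGauss (fun i => if i = j then 1 else 0)
      have hfun : (fun ω => ∑ i ∈ Finset.Icc 1 n, (if i = j then (1:ℝ) else 0) * X i ω) = X j := by
        funext ω
        rw [Finset.sum_eq_single j]
        · simp
        · intro b _ hb; simp [hb]
        · intro h; exact absurd (Finset.mem_Icc.mpr ⟨hj1, hj⟩) h
      rw [hfun] at hv
      have h2 : MemLp id 2 (Measure.map (X j) ℙ) := by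
        rw [hv]; exact aux_memL2_gaussian v
      exact (memLp_map_measure_iff aestronglyMeasurable_id (hmeas j).aemeasurable).mp h2
  -- increments
  set Z : ℕ → Ω → ℝ := fun k ω => X (k + 1) ω - X k ω with hZ
  have hZL2 : ∀ k : ℕ, k < n → MemLp (Z k) 2 ℙ :=
    fun k hk => (hL2 (k + 1) hk).sub (hL2 k hk.le)
  have hZint : ∀ k l : ℕ, k < n → l < n → Integrable (fun ω => Z k ω * Z l ω) ℙ :=
    fun k l hk hl => aux_integrable_mul (hZL2 k hk) (hZL2 l hl)
  set M : Matrix (Fin n) (Fin n) ℝ :=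
    Matrix.of (fun k l : Fin n => ∫ ω, Z k ω * Z l ω) with hM
  -- bilinear expansion
  have bil : ∀ a b : Fin n → ℝ,
      ∫ ω, (∑ k : Fin n, a k * Z k ω) * (∑ l : Fin n, b l * Z l ω)
        = ∑ k : Fin n, ∑ l : Fin n, (a k * b l) * M k l := by
    intro a b
    have h1 : ∀ ω, (∑ k : Fin n, a k * Z k ω) * (∑ l : Fin n, b l * Z l ω)
        = ∑ k : Fin n, ∑ l : Fin n, (a k * b l) * (Z k ω * Z l ω) := by
      intro ω
      rw [Finset.sum_mul_sum]
      exact Finset.sum_congr rfl fun k _ => Finset.sum_congr rfl fun l _ => by ring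
    simp_rw [h1]
    rw [integral_finset_sum _ (fun (k : Fin n) _ => integrable_finset_sum _
      (fun (l : Fin n) _ => ((hZint k l k.2 l.2).const_mul _)))]
    refine Finset.sum_congr rfl fun (k : Fin n) _ => ?_
    rw [integral_finset_sum _ (fun (l : Fin n) _ => ((hZint k l k.2 l.2).const_mul _))]
    exact Finset.sum_congr rfl fun l _ => integral_const_mul _ _
  -- the quadratic inequality in Fin n form
  have hnd' : ∀ x : Fin n → ℝ,
      κ * ∑ k : Fin n, x k ^ 2 * c ((k : ℕ) + 1)
        ≤ ∑ k : Fin n, ∑ l : Fin n, (x k * x l) * M k l := by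
    intro x
    set x' : ℕ → ℝ := fun i => if h : 1 ≤ i ∧ i - 1 < n then x ⟨i - 1, h.2⟩ else 0 with hx'def
    have hx' : ∀ k : Fin n, x' ((k : ℕ) + 1) = x k := by
      intro k
      have hcond : 1 ≤ (k : ℕ) + 1 ∧ (k : ℕ) + 1 - 1 < n :=
        ⟨Nat.le_add_left 1 _, by simpa using k.2⟩
      simp only [hx'def]
      rw [dif_pos hcond]
      exact congrArg x (Fin.ext (by simp))
    have h1 := hnd x'
    have hL : κ * ∑ i ∈ Finset.Icc 1 n, (x' i) ^ 2 * c i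
        = κ * ∑ k : Fin n, x k ^ 2 * c ((k : ℕ) + 1) := by
      rw [aux_sum_Icc n (fun i => (x' i) ^ 2 * c i)]
      simp_rw [hx']
    have hR : (fun ω => (∑ i ∈ Finset.Icc 1 n, x' i * (X i ω - X (i - 1) ω)) ^ 2)
        = fun ω => (∑ k : Fin n, x k * Z k ω) ^ 2 := by
      funext ω
      congr 1
      rw [aux_sum_Icc n (fun i => x' i * (X i ω - X (i - 1) ω))]
      refine Finset.sum_congr rfl fun k _ => ?_
      rw [hx']
      simp [hZ]
    rw [hL, hR] at h1
    have := bil x x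
    simp_rw [← sq] at this
    rw [this] at h1
    exact h1
  -- M is hermitian
  have hMh : M.IsHermitian := by
    ext k l
    simp only [Matrix.conjTranspose_apply, star_trivial, hM, Matrix.of_apply]
    exact integral_congr_ae (ae_of_all _ fun ω => mul_comm _ _)
  -- M - κ diag c is PSD
  set D : Matrix (Fin n) (Fin n) ℝ :=
    Matrix.diagonal (fun k : Fin n => κ * c ((k : ℕ) + 1)) with hD
  have hPSD : (M - D).PosSemidef := by
    refine Matrix.PosSemidef.of_dotProduct_mulVec_nonneg ?_ ?_
    · exact hMh.sub (Matrix.isHermitian_diagonal _)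
    · intro x
      have eM : dotProduct (star x) (Matrix.mulVec M x)
          = ∑ k : Fin n, ∑ l : Fin n, (x k * x l) * M k l := by
        simp only [dotProduct, Matrix.mulVec, Pi.star_apply, star_trivial,
          Finset.mul_sum]
        exact Finset.sum_congr rfl fun k _ => Finset.sum_congr rfl fun l _ => by ring
      have eD : dotProduct (star x) (Matrix.mulVec D x)
          = κ * ∑ k : Fin n, x k ^ 2 * c ((k : ℕ) + 1) := by
        simp only [hD, dotProduct, Matrix.mulVec_diagonal, Pi.star_apply, star_trivial,
          Finset.mul_sum]
        exact Finset.sum_congr rfl fun k _ => by ring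
      rw [Matrix.sub_mulVec, dotProduct_sub, eM, eD, sub_nonneg]
      exact hnd' x
  -- lower bound on det M
  have hdetM : κ ^ n * ∏ i ∈ Finset.Icc 1 n, c i ≤ M.det := by
    have hMeq : M = D + (M - D) := by abel
    have h := aux_det_diag_add (fun k : Fin n => κ * c ((k : ℕ) + 1))
      (fun k => mul_pos hκ (hc _)) hPSD
    rw [← hD, ← hMeq] at h
    calc κ ^ n * ∏ i ∈ Finset.Icc 1 n, c i
        = ∏ k : Fin n, (κ * c ((k : ℕ) + 1)) := by
          rw [Finset.prod_mul_distrib, Finset.prod_const, Finset.card_univ, Fintype.card_fin,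
            aux_prod_Icc n c]
      _ ≤ M.det := h
  -- lower triangular L with A = L * M * Lᵀ
  set L : Matrix (Fin n) (Fin n) ℝ :=
    Matrix.of (fun i k : Fin n => if (k : ℕ) ≤ (i : ℕ) then (1:ℝ) else 0) with hLdef
  have hXfin : ∀ (i : Fin n) (ω : Ω),
      X ((i : ℕ) + 1) ω = ∑ k : Fin n, L i k * Z k ω := by
    intro i ω
    have htel : X ((i : ℕ) + 1) ω = ∑ k ∈ Finset.range ((i : ℕ) + 1), Z k ω := by
      rw [hZ]
      rw [Finset.sum_range_sub (fun k => X k ω)]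
      rw [hX0 ω, sub_zero]
    rw [htel, ← aux_tri i (fun k => Z k ω)]
    refine Finset.sum_congr rfl fun k _ => ?_
    simp only [hLdef, Matrix.of_apply, ite_mul, one_mul, zero_mul]
  have hALM : A = L * M * Lᵀ := by
    ext i j
    rw [hA i j]
    rw [show (∫ ω, X ((i : ℕ) + 1) ω * X ((j : ℕ) + 1) ω)
        = ∫ ω, (∑ k : Fin n, L i k * Z k ω) * (∑ l : Fin n, L j l * Z l ω) from by
      simp_rw [← hXfin]]
    rw [bil]
    have h2 : (L * M * Lᵀ) i j = ∑ l : Fin n, ∑ k : Fin n, (L i k * L j l) * M k l := by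
      simp only [Matrix.mul_apply, Matrix.transpose_apply, Finset.sum_mul]
      exact Finset.sum_congr rfl fun l _ => Finset.sum_congr rfl fun k _ => by ring
    rw [h2, Finset.sum_comm]
  have hdetL : L.det = 1 := by
    have htri : L.BlockTriangular OrderDual.toDual := by
      intro a b hab
      have : (a : ℕ) < (b : ℕ) := hab
      simp only [hLdef, Matrix.of_apply, if_neg (by omega : ¬ (b : ℕ) ≤ (a : ℕ))]
    rw [Matrix.det_of_lowerTriangular L htri]
    simp [hLdef]
  rw [hALM, Matrix.det_mul, Matrix.det_mul, Matrix.det_transpose, hdetL, one_mul, mul_one]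
  exact hdetM
end

section
/- For H ∈ (0,1) and d ≥ 1 with Hd > 1, the integral n^{Hd-2} ∫_0^{εn^{1/2}} ∫_0^{nb} (s^{2H} + r^{2H})^{-d/2} ds dr tends to 0 as n → ∞, for any fixed ε > 0 and b > 0. -/
open MeasureTheory Filter Real

theorem stmt14 (H : ℝ) (d : ℕ) (hH : H ∈ Set.Ioo (0:ℝ) 1) (hd : 1 ≤ d)
    (h1 : 1 < H * d) (h2 : H * d < 2) (ε b : ℝ) (hε : 0 < ε) (hb : 0 < b) :
    Tendsto (fun n : ℕ => (n : ℝ) ^ (H * d - 2) *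
        ∫ s in Set.Ioc (0:ℝ) (ε * (n : ℝ) ^ ((1:ℝ) / 2)),
          ∫ r in Set.Ioc (0:ℝ) ((n : ℝ) * b),
            (s ^ (2 * H) + r ^ (2 * H)) ^ (-(d : ℝ) / 2))
      atTop (nhds 0) := by
  obtain ⟨hH0, hH1⟩ := hH
  set c : ℝ := -(H * d) / 2 with hc
  have hc1 : (-1 : ℝ) < c := by rw [hc]; linarith
  have hc0 : c < 0 := by rw [hc]; linarith
  have hc1' : (0:ℝ) < c + 1 := by linarith
  have hdneg : (-(d:ℝ)/2 : ℝ) ≤ 0 := by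
    have : (1:ℝ) ≤ d := by exact_mod_cast hd
    linarith
  -- pointwise bound
  have bound_pt : ∀ s r : ℝ, 0 < s → 0 < r →
      (s ^ (2 * H) + r ^ (2 * H)) ^ (-(d : ℝ) / 2) ≤ s ^ c * r ^ c := by
    intro s r hs hr
    have hsH : (0:ℝ) < s ^ H := rpow_pos_of_pos hs H
    have hrH : (0:ℝ) < r ^ H := rpow_pos_of_pos hr H
    have hs2 : s ^ (2 * H) = (s ^ H) ^ (2:ℕ) := by
      rw [← rpow_natCast (s ^ H) 2, ← rpow_mul hs.le]; ring_nf
    have hr2 : r ^ (2 * H) = (r ^ H) ^ (2:ℕ) := by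
      rw [← rpow_natCast (r ^ H) 2, ← rpow_mul hr.le]; ring_nf
    have hle : s ^ H * r ^ H ≤ s ^ (2 * H) + r ^ (2 * H) := by
      rw [hs2, hr2]; nlinarith [sq_nonneg (s ^ H - r ^ H)]
    have h := rpow_le_rpow_of_nonpos (mul_pos hsH hrH) hle hdneg
    calc (s ^ (2 * H) + r ^ (2 * H)) ^ (-(d : ℝ) / 2)
        ≤ (s ^ H * r ^ H) ^ (-(d : ℝ) / 2) := h
      _ = s ^ c * r ^ c := by
          rw [mul_rpow hsH.le hrH.le, ← rpow_mul hs.le, ← rpow_mul hr.le, hc]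
          ring_nf
  -- integrability and value of ∫ r^c on Ioc 0 a
  have hint : ∀ a : ℝ, 0 ≤ a → IntegrableOn (fun x : ℝ => x ^ c) (Set.Ioc 0 a) := by
    intro a ha
    have := (intervalIntegral.intervalIntegrable_rpow' hc1 (a := 0) (b := a))
    rwa [intervalIntegrable_iff_integrableOn_Ioc_of_le ha] at this
  have hval : ∀ a : ℝ, 0 ≤ a →
      (∫ x in Set.Ioc (0:ℝ) a, x ^ c) = a ^ (c + 1) / (c + 1) := by
    intro a ha
    rw [← intervalIntegral.integral_of_le ha, integral_rpow (Or.inl hc1),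
      Real.zero_rpow (ne_of_gt hc1')]
    ring
  -- main bound
  have key : ∀ᶠ n : ℕ in atTop, (n : ℝ) ^ (H * d - 2) *
        (∫ s in Set.Ioc (0:ℝ) (ε * (n : ℝ) ^ ((1:ℝ) / 2)),
          ∫ r in Set.Ioc (0:ℝ) ((n : ℝ) * b),
            (s ^ (2 * H) + r ^ (2 * H)) ^ (-(d : ℝ) / 2))
      ≤ (ε ^ (c+1) * b ^ (c+1) / ((c+1)*(c+1))) * (n:ℝ) ^ (H*d - 2 + (3/2)*(c+1)) := by
    filter_upwards [eventually_ge_atTop 1] with n hn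
    have hN : (0:ℝ) < n := by exact_mod_cast hn
    set A : ℝ := ε * (n : ℝ) ^ ((1:ℝ) / 2) with hA
    set B : ℝ := (n : ℝ) * b with hB
    have hA0 : 0 < A := by positivity
    have hB0 : 0 < B := by positivity
    have hGB : (∫ x in Set.Ioc (0:ℝ) B, x ^ c) = B ^ (c + 1) / (c + 1) := hval B hB0.le
    have hGA : (∫ x in Set.Ioc (0:ℝ) A, x ^ c) = A ^ (c + 1) / (c + 1) := hval A hA0.le
    -- inner bound
    have inner_le : ∀ s : ℝ, 0 < s →
        (∫ r in Set.Ioc (0:ℝ) B, (s ^ (2 * H) + r ^ (2 * H)) ^ (-(d : ℝ) / 2))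
          ≤ s ^ c * (B ^ (c + 1) / (c + 1)) := by
      intro s hs
      have hmono : (∫ r in Set.Ioc (0:ℝ) B, (s ^ (2 * H) + r ^ (2 * H)) ^ (-(d : ℝ) / 2))
          ≤ ∫ r in Set.Ioc (0:ℝ) B, s ^ c * r ^ c := by
        apply integral_mono_of_nonneg
        · rw [EventuallyLE, ae_restrict_iff' measurableSet_Ioc]
          filter_upwards with r hr
          have hr0 : 0 < r := hr.1
          positivity
        · exact (hint B hB0.le).const_mul _
        · rw [EventuallyLE, ae_restrict_iff' measurableSet_Ioc]
          filter_upwards with r hr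
          exact bound_pt s r hs hr.1
      rw [integral_const_mul, hGB] at hmono
      exact hmono
    have inner_nonneg : ∀ s : ℝ, 0 < s →
        0 ≤ ∫ r in Set.Ioc (0:ℝ) B, (s ^ (2 * H) + r ^ (2 * H)) ^ (-(d : ℝ) / 2) := by
      intro s hs
      apply setIntegral_nonneg measurableSet_Ioc
      intro r hr
      have hr0 : 0 < r := hr.1
      positivity
    -- outer bound
    have outer_le : (∫ s in Set.Ioc (0:ℝ) A,
          ∫ r in Set.Ioc (0:ℝ) B, (s ^ (2 * H) + r ^ (2 * H)) ^ (-(d : ℝ) / 2))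
        ≤ (A ^ (c + 1) / (c + 1)) * (B ^ (c + 1) / (c + 1)) := by
      have hmono : (∫ s in Set.Ioc (0:ℝ) A,
            ∫ r in Set.Ioc (0:ℝ) B, (s ^ (2 * H) + r ^ (2 * H)) ^ (-(d : ℝ) / 2))
          ≤ ∫ s in Set.Ioc (0:ℝ) A, s ^ c * (B ^ (c + 1) / (c + 1)) := by
        apply integral_mono_of_nonneg
        · rw [EventuallyLE, ae_restrict_iff' measurableSet_Ioc]
          filter_upwards with s hs
          exact inner_nonneg s hs.1
        · exact (hint A hA0.le).mul_const _
        · rw [EventuallyLE, ae_restrict_iff' measurableSet_Ioc]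
          filter_upwards with s hs
          exact inner_le s hs.1
      rw [integral_mul_const, hGA] at hmono
      exact hmono
    have houter_pow : (n:ℝ) ^ (H * d - 2) *
          ((A ^ (c + 1) / (c + 1)) * (B ^ (c + 1) / (c + 1)))
        = (ε ^ (c+1) * b ^ (c+1) / ((c+1)*(c+1))) * (n:ℝ) ^ (H*d - 2 + (3/2)*(c+1)) := by
      have e1 : ((n:ℝ) ^ ((1:ℝ)/2)) ^ (c+1) = (n:ℝ) ^ ((1:ℝ)/2*(c+1)) :=
        (rpow_mul hN.le _ _).symm
      have e2 : (n:ℝ) ^ (H*d - 2 + (3/2)*(c+1)) =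
          (n:ℝ) ^ (H*d-2) * ((n:ℝ) ^ ((1:ℝ)/2*(c+1)) * (n:ℝ) ^ (c+1)) := by
        rw [← rpow_add hN, ← rpow_add hN]; ring_nf
      rw [hA, hB, mul_rpow hε.le (by positivity), mul_rpow hN.le hb.le, e1, e2]
      have hne : (c+1) ≠ 0 := ne_of_gt hc1'
      field_simp
    calc (n : ℝ) ^ (H * d - 2) *
          (∫ s in Set.Ioc (0:ℝ) A, ∫ r in Set.Ioc (0:ℝ) B,
            (s ^ (2 * H) + r ^ (2 * H)) ^ (-(d : ℝ) / 2))
        ≤ (n : ℝ) ^ (H * d - 2) *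
          ((A ^ (c + 1) / (c + 1)) * (B ^ (c + 1) / (c + 1))) := by
          exact mul_le_mul_of_nonneg_left outer_le (by positivity)
      _ = _ := houter_pow
  -- nonnegativity
  have nonneg : ∀ n : ℕ, 0 ≤ (n : ℝ) ^ (H * d - 2) *
        (∫ s in Set.Ioc (0:ℝ) (ε * (n : ℝ) ^ ((1:ℝ) / 2)),
          ∫ r in Set.Ioc (0:ℝ) ((n : ℝ) * b),
            (s ^ (2 * H) + r ^ (2 * H)) ^ (-(d : ℝ) / 2)) := by
    intro n
    apply mul_nonneg (by positivity)
    apply setIntegral_nonneg measurableSet_Ioc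
    intro s hs
    apply setIntegral_nonneg measurableSet_Ioc
    intro r hr
    have hs0 : 0 < s := hs.1
    have hr0 : 0 < r := hr.1
    positivity
  -- the dominating sequence tends to 0
  have hexp : H*d - 2 + (3/2)*(c+1) < 0 := by rw [hc]; nlinarith
  have hlim : Tendsto (fun n : ℕ =>
      (ε ^ (c+1) * b ^ (c+1) / ((c+1)*(c+1))) * (n:ℝ) ^ (H*d - 2 + (3/2)*(c+1)))
      atTop (nhds 0) := by
    have h0 := (tendsto_rpow_neg_atTop
        (by linarith : (0:ℝ) < -(H*d - 2 + (3/2)*(c+1)))).comp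
      (tendsto_natCast_atTop_atTop (R := ℝ))
    have h2 : Tendsto (fun n : ℕ => (n:ℝ) ^ (H*d - 2 + (3/2)*(c+1))) atTop (nhds 0) := by
      simpa [Function.comp_def, neg_neg] using h0
    simpa using h2.const_mul (ε ^ (c+1) * b ^ (c+1) / ((c+1)*(c+1)))
  exact squeeze_zero' (Eventually.of_forall nonneg) key hlim
end

section
/- Let f ∈ L^1(R^d) with ∫ f = 0 and ∫ |f(z)| |z|^{2/H - d} dz < ∞ where 2/(d+2) < H < 2/d. Then the constant D = (1/(2π)^d) ∫_{R^d} |f̂(x)|^2 |x|^{-2/H} dx is finite, where f̂(x) = ∫ e^{i x·z} f(z) dz. -/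
open MeasureTheory Real

section auxlemmas
open Set
open scoped ENNReal

lemma aux_ball (d : ℕ) (hd : 1 ≤ d) {s : ℝ} (hs : -(d:ℝ) < s) :
    IntegrableOn (fun x : EuclideanSpace ℝ (Fin d) => ‖x‖ ^ s) (Metric.ball 0 1) := by
  have hfr : Module.finrank ℝ (EuclideanSpace ℝ (Fin d)) = d := by simp [finrank_euclideanSpace]
  have hmeas : Measurable fun x : EuclideanSpace ℝ (Fin d) => ‖x‖ ^ s := by fun_prop
  rcases le_or_gt 0 s with h0 | h0
  · refine Integrable.mono' (g := fun _ => (1:ℝ)) (integrableOn_const measure_ball_lt_top.ne)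
      hmeas.aestronglyMeasurable ?_
    filter_upwards [ae_restrict_mem measurableSet_ball] with x hx
    rw [Metric.mem_ball, dist_zero_right] at hx
    rw [Real.norm_eq_abs, abs_of_nonneg (rpow_nonneg (norm_nonneg _) _)]
    exact Real.rpow_le_one (norm_nonneg _) hx.le h0
  · have hnn : ∀ x : EuclideanSpace ℝ (Fin d), 0 ≤ ‖x‖ ^ s := fun x => rpow_nonneg (norm_nonneg _) _
    refine ⟨hmeas.aestronglyMeasurable, ?_⟩
    rw [hasFiniteIntegral_iff_ofReal (ae_of_all _ hnn)]
    set μ := volume.restrict (Metric.ball (0:EuclideanSpace ℝ (Fin d)) 1) with hμ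
    rw [lintegral_eq_lintegral_meas_le μ (ae_of_all _ hnn) hmeas.aemeasurable]
    have key : ∀ t : ℝ, t ∈ Ioi (1:ℝ) →
        μ {a : EuclideanSpace ℝ (Fin d) | t ≤ ‖a‖ ^ s} ≤
          ENNReal.ofReal (t ^ ((d:ℝ) * s⁻¹)) * volume (Metric.closedBall (0:EuclideanSpace ℝ (Fin d)) 1) := by
      intro t ht'
      have ht : (0:ℝ) < t := lt_trans one_pos ht'
      have hsub : {a : EuclideanSpace ℝ (Fin d) | t ≤ ‖a‖ ^ s} ⊆
          Metric.closedBall 0 (t ^ s⁻¹) := by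
        intro a ha
        simp only [mem_setOf_eq] at ha
        rw [Metric.mem_closedBall, dist_zero_right]
        have h1 : (‖a‖ ^ s) ^ s⁻¹ ≤ t ^ s⁻¹ :=
          Real.rpow_le_rpow_of_nonpos ht ha (inv_nonpos.mpr h0.le)
        rwa [← Real.rpow_mul (norm_nonneg _), mul_inv_cancel₀ h0.ne, Real.rpow_one] at h1
      calc μ {a : EuclideanSpace ℝ (Fin d) | t ≤ ‖a‖ ^ s}
          ≤ volume (Metric.closedBall (0:EuclideanSpace ℝ (Fin d)) (t ^ s⁻¹)) :=
            le_trans (Measure.restrict_apply_le _ _) (measure_mono hsub)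
        _ = ENNReal.ofReal ((t ^ s⁻¹) ^ Module.finrank ℝ (EuclideanSpace ℝ (Fin d))) *
              volume (Metric.closedBall (0:EuclideanSpace ℝ (Fin d)) 1) :=
            Measure.addHaar_closedBall' _ _ (rpow_nonneg ht.le _)
        _ = _ := by
            rw [hfr, ← Real.rpow_natCast (t ^ s⁻¹), ← Real.rpow_mul ht.le, mul_comm s⁻¹]
    calc (∫⁻ t in Ioi (0:ℝ), μ {a | t ≤ ‖a‖ ^ s})
        ≤ ∫⁻ t in Ioc (0:ℝ) 1 ∪ Ioi 1, μ {a | t ≤ ‖a‖ ^ s} :=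
          lintegral_mono_set Ioi_subset_Ioc_union_Ioi
      _ ≤ (∫⁻ t in Ioc (0:ℝ) 1, μ {a | t ≤ ‖a‖ ^ s}) + ∫⁻ t in Ioi 1, μ {a | t ≤ ‖a‖ ^ s} :=
          lintegral_union_le _ _ _
      _ < ∞ := by
          refine ENNReal.add_lt_top.2 ⟨?_, ?_⟩
          · calc (∫⁻ t in Ioc (0:ℝ) 1, μ {a | t ≤ ‖a‖ ^ s})
                ≤ ∫⁻ _ in Ioc (0:ℝ) 1, volume (Metric.ball (0:EuclideanSpace ℝ (Fin d)) 1) := by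
                  refine lintegral_mono fun t => ?_
                  exact (measure_mono (subset_univ _)).trans_eq (Measure.restrict_apply_univ _)
              _ < ∞ := by
                  rw [setLIntegral_const]
                  exact ENNReal.mul_lt_top measure_ball_lt_top (by simp [Real.volume_Ioc])
          · calc (∫⁻ t in Ioi (1:ℝ), μ {a | t ≤ ‖a‖ ^ s})
                ≤ ∫⁻ t in Ioi (1:ℝ), ENNReal.ofReal (t ^ ((d:ℝ) * s⁻¹)) *
                    volume (Metric.closedBall (0:EuclideanSpace ℝ (Fin d)) 1) :=
                  setLIntegral_mono_ae (by fun_prop) (ae_of_all _ key)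
              _ = (∫⁻ t in Ioi (1:ℝ), ENNReal.ofReal (t ^ ((d:ℝ) * s⁻¹))) *
                    volume (Metric.closedBall (0:EuclideanSpace ℝ (Fin d)) 1) :=
                  lintegral_mul_const' _ _ measure_closedBall_lt_top.ne
              _ < ∞ := by
                  refine ENNReal.mul_lt_top ?_ measure_closedBall_lt_top
                  have hlt : (d:ℝ) * s⁻¹ < -1 := by
                    have h1 : -s < (d:ℝ) := by linarith
                    have h2 : s⁻¹ < 0 := inv_lt_zero'.mpr h0
                    have := mul_lt_mul_of_neg_right h1 h2
                    rwa [neg_mul, mul_inv_cancel₀ h0.ne] at this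
                    
                  refine IntegrableOn.setLIntegral_lt_top ?_
                  exact integrableOn_Ioi_rpow_of_lt hlt one_pos

lemma aux_tail (d : ℕ) (hd : 1 ≤ d) {r : ℝ} (hr : (d:ℝ) < r) :
    IntegrableOn (fun x : EuclideanSpace ℝ (Fin d) => ‖x‖ ^ (-r))
      (Metric.ball (0:EuclideanSpace ℝ (Fin d)) 1)ᶜ := by
  have hfr : Module.finrank ℝ (EuclideanSpace ℝ (Fin d)) = d := by simp [finrank_euclideanSpace]
  have hr0 : (0:ℝ) < r := lt_of_le_of_lt (by positivity) hr
  have h := integrable_one_add_norm (E := EuclideanSpace ℝ (Fin d)) (μ := volume)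
    (r := r) (by rw [hfr]; exact hr)
  refine Integrable.mono' ((h.const_mul ((2:ℝ) ^ r)).integrableOn)
    (Measurable.aestronglyMeasurable (by fun_prop)).restrict ?_
  filter_upwards [ae_restrict_mem measurableSet_ball.compl] with x hx
  have hx1 : (1:ℝ) ≤ ‖x‖ := by
    simpa [Metric.mem_ball, dist_zero_right] using hx
  have hx0 : (0:ℝ) < ‖x‖ := lt_of_lt_of_le one_pos hx1
  rw [Real.norm_eq_abs, abs_of_nonneg (rpow_nonneg (norm_nonneg _) _)]
  have hdiv : (0:ℝ) < (1 + ‖x‖) / 2 := by linarith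
  have hle : (1 + ‖x‖) / 2 ≤ ‖x‖ := by linarith
  have h1 : ‖x‖ ^ (-r) ≤ ((1 + ‖x‖) / 2) ^ (-r) :=
    Real.rpow_le_rpow_of_nonpos hdiv hle (neg_nonpos.mpr hr0.le)
  calc ‖x‖ ^ (-r) ≤ ((1 + ‖x‖) / 2) ^ (-r) := h1
    _ = (2:ℝ) ^ r * (1 + ‖x‖) ^ (-r) := by
        rw [Real.div_rpow (by linarith) (by norm_num), Real.rpow_neg (by norm_num : (0:ℝ) ≤ 2)]
        field_simp

end auxlemmas

theorem stmt15 (d : ℕ) (hd : 1 ≤ d) (H : ℝ)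
    (hH1 : 2 / ((d : ℝ) + 2) < H) (hH2 : H < 2 / (d : ℝ))
    (f : EuclideanSpace ℝ (Fin d) → ℝ) (hf : Integrable f)
    (hzero : ∫ z, f z = 0)
    (hmom : Integrable (fun z : EuclideanSpace ℝ (Fin d) => |f z| * ‖z‖ ^ (2 / H - d))) :
    Integrable (fun x : EuclideanSpace ℝ (Fin d) =>
      ‖∫ z, Complex.exp (Complex.I * ((inner ℝ x z : ℝ) : ℂ)) * (f z : ℂ)‖ ^ 2 *
        ‖x‖ ^ (-(2 / H))) := by
  have hd0 : (0:ℝ) < d := by exact_mod_cast hd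
  have hH0 : (0:ℝ) < H := lt_trans (by positivity) hH1
  have hHd : (d:ℝ) < 2 / H := by
    rw [lt_div_iff₀ hH0]
    calc (d:ℝ) * H < (d:ℝ) * (2 / d) := by
          exact mul_lt_mul_of_pos_left hH2 hd0
      _ = 2 := by field_simp
  have hHd2 : 2 / H < (d:ℝ) + 2 := by
    rw [div_lt_iff₀ hH0]
    have h2 : 2 / ((d:ℝ) + 2) * ((d:ℝ)+2) < H * ((d:ℝ)+2) :=
      mul_lt_mul_of_pos_right hH1 (by positivity)
    rw [div_mul_cancel₀ _ (by positivity : ((d:ℝ)+2) ≠ 0)] at h2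
    nlinarith [h2]
  set β : ℝ := 2 / H - d with hβ
  have hβ0 : 0 < β := by simp [hβ]; linarith
  have hβ2 : β < 2 := by simp [hβ]; linarith
  set α : ℝ := min β 1 with hα
  have hα0 : 0 < α := lt_min hβ0 one_pos
  have hα1 : α ≤ 1 := min_le_right _ _
  have hαβ : α ≤ β := min_le_left _ _
  -- the Fourier-type integrand and its properties
  set F : EuclideanSpace ℝ (Fin d) → ℂ := fun x => ∫ z, Complex.exp (Complex.I * ((inner ℝ x z : ℝ) : ℂ)) * (f z : ℂ)
    with hF
  show Integrable (fun x : EuclideanSpace ℝ (Fin d) => ‖F x‖ ^ 2 * ‖x‖ ^ (-(2 / H)))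
  have hker_norm : ∀ (x z : EuclideanSpace ℝ (Fin d)), ‖Complex.exp (Complex.I * ((inner ℝ x z : ℝ) : ℂ)) * (f z : ℂ)‖
      = |f z| := by
    intro x z
    rw [norm_mul, Complex.norm_exp]
    simp [Real.norm_eq_abs]
  have hker_meas : ∀ x : EuclideanSpace ℝ (Fin d), AEStronglyMeasurable
      (fun z => Complex.exp (Complex.I * ((inner ℝ x z : ℝ) : ℂ)) * (f z : ℂ)) volume := by
    intro x
    apply AEStronglyMeasurable.mul
    · exact (Complex.continuous_exp.comp (continuous_const.mul
        (Complex.continuous_ofReal.comp (continuous_const.inner continuous_id)))).aestronglyMeasurable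
    · exact Complex.continuous_ofReal.comp_aestronglyMeasurable hf.aestronglyMeasurable
  have hker_int : ∀ x : EuclideanSpace ℝ (Fin d), Integrable
      (fun z => Complex.exp (Complex.I * ((inner ℝ x z : ℝ) : ℂ)) * (f z : ℂ)) volume := by
    intro x
    exact Integrable.mono' hf.abs (hker_meas x) (ae_of_all _ fun z => le_of_eq (hker_norm x z))
  -- continuity of F
  have hFcont : Continuous F := by
    refine continuous_of_dominated hker_meas (fun x => ae_of_all _ fun z => ?_) hf.abs ?_
    · rw [hker_norm x z]
    · refine ae_of_all _ fun z => ?_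
      exact (Complex.continuous_exp.comp (continuous_const.mul
        (Complex.continuous_ofReal.comp (continuous_id.inner continuous_const)))).mul
        continuous_const
  -- the target function and its measurability
  have htarget_meas : AEStronglyMeasurable
      (fun x : EuclideanSpace ℝ (Fin d) => ‖F x‖ ^ 2 * ‖x‖ ^ (-(2 / H))) volume := by
    refine AEStronglyMeasurable.mul ?_ ?_
    · exact ((hFcont.norm.pow 2)).aestronglyMeasurable
    · exact Measurable.aestronglyMeasurable
        (by fun_prop : Measurable fun x : EuclideanSpace ℝ (Fin d) => ‖x‖ ^ (-(2/H)))
  -- global bound : ‖F x‖ ≤ M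
  set M : ℝ := ∫ z, |f z| with hM
  have hM0 : 0 ≤ M := integral_nonneg fun z => abs_nonneg _
  have hbM : ∀ x : EuclideanSpace ℝ (Fin d), ‖F x‖ ≤ M := by
    intro x
    refine (norm_integral_le_integral_norm _).trans ?_
    rw [hM]
    refine le_of_eq (integral_congr_ae (ae_of_all _ fun z => ?_))
    exact hker_norm x z
  -- integrability of |f| ‖z‖^α
  have hmomα : Integrable (fun z : EuclideanSpace ℝ (Fin d) => |f z| * ‖z‖ ^ α) volume := by
    refine Integrable.mono' (hf.abs.add hmom)
      (hf.abs.aestronglyMeasurable.mul (Measurable.aestronglyMeasurable (by fun_prop)))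
      (ae_of_all _ fun z => ?_)
    simp only [Pi.add_apply]
    rw [Real.norm_eq_abs, abs_of_nonneg (by positivity)]
    rcases le_or_gt (‖z‖) 1 with hz | hz
    · have h1 : ‖z‖ ^ α ≤ 1 := Real.rpow_le_one (norm_nonneg _) hz hα0.le
      have h2 : (0:ℝ) ≤ |f z| * ‖z‖ ^ β := by positivity
      have h3 := mul_le_mul_of_nonneg_left h1 (abs_nonneg (f z))
      linarith
    · have h1 : ‖z‖ ^ α ≤ ‖z‖ ^ β := Real.rpow_le_rpow_of_exponent_le hz.le hαβ
      have h3 := mul_le_mul_of_nonneg_left h1 (abs_nonneg (f z))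
      linarith [abs_nonneg (f z)]
  set C : ℝ := ∫ z, |f z| * ‖z‖ ^ α with hC
  have hC0 : 0 ≤ C := integral_nonneg fun z => by positivity
  -- bound near zero : ‖F x‖ ≤ 2 * C * ‖x‖ ^ α
  have hbC : ∀ x : EuclideanSpace ℝ (Fin d), ‖F x‖ ≤ 2 * C * ‖x‖ ^ α := by
    intro x
    have hzC : ∫ z, (f z : ℂ) = 0 := by
      have h := integral_ofReal (𝕜 := ℂ) (f := f) (μ := (volume : Measure (EuclideanSpace ℝ (Fin d))))
      rw [hzero] at h
      simpa using h
    have hsplit : F x = ∫ z, (Complex.exp (Complex.I * ((inner ℝ x z : ℝ) : ℂ)) - 1) * (f z : ℂ) := by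
      have : (fun z : EuclideanSpace ℝ (Fin d) => (Complex.exp (Complex.I * ((inner ℝ x z : ℝ) : ℂ)) - 1) * (f z : ℂ))
          = fun z : EuclideanSpace ℝ (Fin d) => Complex.exp (Complex.I * ((inner ℝ x z : ℝ) : ℂ)) * (f z : ℂ) - (f z : ℂ) := by
        funext z; ring
      have hfC : Integrable (fun z : EuclideanSpace ℝ (Fin d) => ((f z : ℝ) : ℂ)) volume :=
        hf.ofReal
      show (∫ z, Complex.exp (Complex.I * ((inner ℝ x z : ℝ) : ℂ)) * (f z : ℂ)) = _
      rw [this, integral_sub (hker_int x) hfC, hzC, sub_zero]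
    rw [hsplit]
    have hptw : ∀ z : EuclideanSpace ℝ (Fin d), ‖(Complex.exp (Complex.I * ((inner ℝ x z : ℝ) : ℂ)) - 1) * (f z : ℂ)‖
        ≤ (2 * ‖x‖ ^ α) * (|f z| * ‖z‖ ^ α) := by
      intro z
      rw [norm_mul]
      have hfz : ‖((f z : ℝ) : ℂ)‖ = |f z| := by
        simp [Real.norm_eq_abs]
      rw [hfz]
      have hkey : ‖Complex.exp (Complex.I * ((inner ℝ x z : ℝ) : ℂ)) - 1‖
          ≤ 2 * (‖x‖ * ‖z‖) ^ α := by
        set t : ℝ := (inner ℝ x z : ℝ) with ht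
        have habs : ‖Complex.I * (t : ℂ)‖ = |t| := by
          simp
        have htle : |t| ≤ ‖x‖ * ‖z‖ := abs_real_inner_le_norm x z
        rcases le_or_gt (|t|) 1 with h1 | h1
        · -- use |exp w - 1| ≤ 2 |w|
          have h2 : ‖Complex.exp (Complex.I * (t:ℂ)) - 1‖
              ≤ 2 * ‖Complex.I * (t:ℂ)‖ :=
            Complex.norm_exp_sub_one_le (by rw [habs]; exact h1)
          rw [habs] at h2
          refine h2.trans ?_
          have h3 : |t| ≤ (‖x‖ * ‖z‖) ^ α := by
            rcases eq_or_lt_of_le (abs_nonneg t) with h4 | h4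
            · rw [← h4]; positivity
            · calc |t| = (|t|) ^ (1:ℝ) := (Real.rpow_one _).symm
                _ ≤ (|t|) ^ α := Real.rpow_le_rpow_of_exponent_ge h4 h1 hα1
                _ ≤ (‖x‖ * ‖z‖) ^ α := Real.rpow_le_rpow (abs_nonneg _) htle hα0.le
          linarith
        · -- use |exp w - 1| ≤ 2
          have h2 : ‖Complex.exp (Complex.I * (t:ℂ)) - 1‖ ≤ 2 := by
            refine (norm_sub_le _ _).trans ?_
            have : ‖Complex.exp (Complex.I * (t:ℂ))‖ = 1 := by
              rw [Complex.norm_exp]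
              simp
            rw [this, norm_one]; norm_num
          refine h2.trans ?_
          have h3 : (1:ℝ) ≤ (‖x‖ * ‖z‖) ^ α := by
            refine Real.one_le_rpow ?_ hα0.le
            exact le_trans h1.le htle
          linarith
      calc ‖Complex.exp (Complex.I * ((inner ℝ x z : ℝ) : ℂ)) - 1‖ * |f z|
          ≤ (2 * (‖x‖ * ‖z‖) ^ α) * |f z| :=
            mul_le_mul_of_nonneg_right hkey (abs_nonneg _)
        _ = (2 * ‖x‖ ^ α) * (|f z| * ‖z‖ ^ α) := by
            rw [Real.mul_rpow (norm_nonneg _) (norm_nonneg _)]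
            ring
    calc ‖∫ z, (Complex.exp (Complex.I * ((inner ℝ x z : ℝ) : ℂ)) - 1) * (f z : ℂ)‖
        ≤ ∫ z, ‖(Complex.exp (Complex.I * ((inner ℝ x z : ℝ) : ℂ)) - 1) * (f z : ℂ)‖ :=
          norm_integral_le_integral_norm _
      _ ≤ ∫ z, (2 * ‖x‖ ^ α) * (|f z| * ‖z‖ ^ α) := by
          refine integral_mono_of_nonneg (ae_of_all _ fun z => norm_nonneg _)
            (hmomα.const_mul _) (ae_of_all _ hptw)
      _ = 2 * C * ‖x‖ ^ α := by
          rw [integral_const_mul, hC]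
          ring
  -- put it together : integrability on the ball and its complement
  rw [← integrableOn_univ, ← Set.union_compl_self (Metric.ball (0:EuclideanSpace ℝ (Fin d)) 1)]
  refine IntegrableOn.union ?_ ?_
  · -- on the ball
    have h2α : β < 2*α := by
      rcases le_total β 1 with h | h
      · have hh : α = β := by rw [hα, min_eq_left h]
        rw [hh]; linarith
      · have hh : α = 1 := by rw [hα, min_eq_right h]
        rw [hh]; linarith
    have hexp : -(d:ℝ) < 2*α - 2/H := by
      have hb : β = 2/H - d := hβ
      clear_value β α
      linarith
    have hint : IntegrableOn (fun x : EuclideanSpace ℝ (Fin d) => (2*C)^2 * ‖x‖ ^ (2*α - 2/H)) (Metric.ball 0 1) :=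
      (aux_ball d hd hexp).const_mul _
    refine Integrable.mono' hint htarget_meas.restrict (ae_of_all _ fun x => ?_)
    rw [Real.norm_eq_abs, abs_of_nonneg (by positivity)]
    have h1 : ‖F x‖ ^ 2 ≤ (2 * C * ‖x‖ ^ α) ^ 2 := by
      have := hbC x
      nlinarith [norm_nonneg (F x)]
    have h2 : ‖F x‖ ^ 2 * ‖x‖ ^ (-(2/H)) ≤ (2 * C * ‖x‖ ^ α) ^ 2 * ‖x‖ ^ (-(2/H)) :=
      mul_le_mul_of_nonneg_right h1 (rpow_nonneg (norm_nonneg _) _)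
    refine h2.trans ?_
    rw [mul_pow]
    have h3 : (‖x‖ ^ α) ^ 2 * ‖x‖ ^ (-(2/H)) ≤ ‖x‖ ^ (2*α - 2/H) := by
      rcases eq_or_ne x 0 with rfl | hx0
      · rw [norm_zero, Real.zero_rpow hα0.ne',
          Real.zero_rpow (neg_ne_zero.mpr (ne_of_gt (by positivity)))]
        rw [show ((0:ℝ))^2 * (0:ℝ) = 0 by ring]
        positivity
      · have hx0' : (0:ℝ) < ‖x‖ := norm_pos_iff.mpr hx0
        rw [← Real.rpow_natCast (‖x‖ ^ α) 2, ← Real.rpow_mul (norm_nonneg _),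
          ← Real.rpow_add hx0']
        apply le_of_eq
        congr 1
        push_cast
        ring
    calc (2*C)^2 * (‖x‖ ^ α) ^ 2 * ‖x‖ ^ (-(2/H))
        = (2*C)^2 * ((‖x‖ ^ α) ^ 2 * ‖x‖ ^ (-(2/H))) := by ring
      _ ≤ (2*C)^2 * ‖x‖ ^ (2*α - 2/H) := by
          exact mul_le_mul_of_nonneg_left h3 (sq_nonneg _)
  · -- off the ball
    have hint : IntegrableOn (fun x : EuclideanSpace ℝ (Fin d) => M^2 * ‖x‖ ^ (-(2/H))) (Metric.ball 0 1)ᶜ :=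
      (aux_tail d hd hHd).const_mul _
    refine Integrable.mono' hint htarget_meas.restrict (ae_of_all _ fun x => ?_)
    rw [Real.norm_eq_abs, abs_of_nonneg (by positivity)]
    have h1 : ‖F x‖ ^ 2 ≤ M ^ 2 := by
      have := hbM x
      nlinarith [norm_nonneg (F x)]
    exact mul_le_mul_of_nonneg_right h1 (rpow_nonneg (norm_nonneg _) _)
end
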